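/- Let A : Ω_A → L(H) be an observable on a finite-dimensional complex Hilbert space H with least disturbing channel Λ_A associated with a minimal Naimark dilation of A. A channel Φ : L(H) → L(K) is C_A-universal for A if and only if Φ is post-processing equivalent to Λ_A, i.e., Φ ∈ [Λ_A]. -/

import Mathlib

open scoped ComplexOrder

noncomputable section

/-- A positive semidefinite operator on a finite-dimensional complex Hilbert space. -/
def IsPosOp {E : Type*} [NormedAddCommGroup E] [InnerProductSpace ℂ E]
    [FiniteDimensional ℂ E] (T : E →ₗ[ℂ] E) : Prop :=
  LinearMap.adjoint T = T ∧ ∀ x : E, 0 ≤ (inner ℂ (T x) x : ℂ)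

/-- An orthogonal projection: a self-adjoint idempotent operator. -/
def IsOrthoProj {E : Type*} [NormedAddCommGroup E] [InnerProductSpace ℂ E]
    [FiniteDimensional ℂ E] (P : E →ₗ[ℂ] E) : Prop :=
  LinearMap.adjoint P = P ∧ P ∘ₗ P = P

/-- A discrete observable (POVM) with finite outcome set `Ω`. -/
def IsPOVM {E : Type*} [NormedAddCommGroup E] [InnerProductSpace ℂ E]
    [FiniteDimensional ℂ E] {Ω : Type*} [Fintype Ω] (A : Ω → E →ₗ[ℂ] E) : Prop :=
  (∀ j, IsPosOp (A j)) ∧ ∑ j, A j = (1 : E →ₗ[ℂ] E)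

/-- A projection-valued measure (PVM). -/
def IsPVM {E : Type*} [NormedAddCommGroup E] [InnerProductSpace ℂ E]
    [FiniteDimensional ℂ E] {Ω : Type*} [Fintype Ω] (P : Ω → E →ₗ[ℂ] E) : Prop :=
  (∀ j, IsOrthoProj (P j)) ∧ ∑ j, P j = (1 : E →ₗ[ℂ] E)

/-- An isometry between inner product spaces: `J* J = 1`. -/
def IsIsometryOp {E F : Type*} [NormedAddCommGroup E] [InnerProductSpace ℂ E]
    [FiniteDimensional ℂ E] [NormedAddCommGroup F] [InnerProductSpace ℂ F]
    [FiniteDimensional ℂ F] (J : E →ₗ[ℂ] F) : Prop :=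
  LinearMap.adjoint J ∘ₗ J = (1 : E →ₗ[ℂ] E)

/-- `(F, P, J)` is a Naimark dilation of the observable `A`. -/
def IsNaimark {E F : Type*} [NormedAddCommGroup E] [InnerProductSpace ℂ E]
    [FiniteDimensional ℂ E] [NormedAddCommGroup F] [InnerProductSpace ℂ F]
    [FiniteDimensional ℂ F] {Ω : Type*} [Fintype Ω]
    (A : Ω → E →ₗ[ℂ] E) (P : Ω → F →ₗ[ℂ] F) (J : E →ₗ[ℂ] F) : Prop :=
  IsPVM P ∧ IsIsometryOp J ∧ ∀ j, A j = LinearMap.adjoint J ∘ₗ P j ∘ₗ J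

/-- A minimal Naimark dilation: the vectors `P j (J φ)` span the dilation space. -/
def IsMinimalNaimark {E F : Type*} [NormedAddCommGroup E] [InnerProductSpace ℂ E]
    [FiniteDimensional ℂ E] [NormedAddCommGroup F] [InnerProductSpace ℂ F]
    [FiniteDimensional ℂ F] {Ω : Type*} [Fintype Ω]
    (A : Ω → E →ₗ[ℂ] E) (P : Ω → F →ₗ[ℂ] F) (J : E →ₗ[ℂ] F) : Prop :=
  IsNaimark A P J ∧ Submodule.span ℂ {x : F | ∃ j φ, x = P j (J φ)} = ⊤

/-- The sandwich map `σ ↦ U ∘ σ ∘ V` as a linear map on operators. -/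
def sandwich {E F : Type*} [NormedAddCommGroup E] [InnerProductSpace ℂ E]
    [NormedAddCommGroup F] [InnerProductSpace ℂ F]
    (U : E →ₗ[ℂ] F) (V : F →ₗ[ℂ] E) : (E →ₗ[ℂ] E) →ₗ[ℂ] (F →ₗ[ℂ] F) where
  toFun σ := U ∘ₗ σ ∘ₗ V
  map_add' σ τ := by
    ext x; simp [LinearMap.add_comp, LinearMap.comp_add]
  map_smul' c σ := by
    ext x; simp

/-- The least disturbing channel `ρ ↦ ∑ j, P j J ρ J* P j` associated with
a Naimark dilation `(F, P, J)`. -/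
def leastDisturbing {E F : Type*} [NormedAddCommGroup E] [InnerProductSpace ℂ E]
    [FiniteDimensional ℂ E] [NormedAddCommGroup F] [InnerProductSpace ℂ F]
    [FiniteDimensional ℂ F] {Ω : Type*} [Fintype Ω]
    (P : Ω → F →ₗ[ℂ] F) (J : E →ₗ[ℂ] F) : (E →ₗ[ℂ] E) →ₗ[ℂ] (F →ₗ[ℂ] F) :=
  ∑ j, sandwich (P j ∘ₗ J) (LinearMap.adjoint J ∘ₗ P j)

/-- The Lüders channel `σ ↦ ∑ j, P j σ P j` of a PVM `P`. -/
def ludersChannel {F : Type*} [NormedAddCommGroup F] [InnerProductSpace ℂ F]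
    {Ω : Type*} [Fintype Ω] (P : Ω → F →ₗ[ℂ] F) : (F →ₗ[ℂ] F) →ₗ[ℂ] (F →ₗ[ℂ] F) :=
  ∑ j, sandwich (P j) (P j)

/-- Complete positivity of a map on operators, expressed through the existence of
a Kraus decomposition (equivalent to complete positivity in finite dimension). -/
def IsCPMap {E F : Type*} [NormedAddCommGroup E] [InnerProductSpace ℂ E]
    [FiniteDimensional ℂ E] [NormedAddCommGroup F] [InnerProductSpace ℂ F]
    [FiniteDimensional ℂ F] (Λ : (E →ₗ[ℂ] E) →ₗ[ℂ] (F →ₗ[ℂ] F)) : Prop :=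
  ∃ (n : ℕ) (V : Fin n → (E →ₗ[ℂ] F)),
    ∀ ρ, Λ ρ = ∑ i, V i ∘ₗ ρ ∘ₗ LinearMap.adjoint (V i)

/-- A quantum channel: a completely positive trace-preserving linear map. -/
def IsChannel {E F : Type*} [NormedAddCommGroup E] [InnerProductSpace ℂ E]
    [FiniteDimensional ℂ E] [NormedAddCommGroup F] [InnerProductSpace ℂ F]
    [FiniteDimensional ℂ F] (Λ : (E →ₗ[ℂ] E) →ₗ[ℂ] (F →ₗ[ℂ] F)) : Prop :=
  IsCPMap Λ ∧ ∀ ρ, LinearMap.trace ℂ F (Λ ρ) = LinearMap.trace ℂ E ρ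

/-- `Λd` is the Heisenberg dual of `Λ`: `tr[Λ(ρ) B] = tr[ρ Λd(B)]` for all `ρ, B`. -/
def IsHeisenbergDual {E F : Type*} [NormedAddCommGroup E] [InnerProductSpace ℂ E]
    [FiniteDimensional ℂ E] [NormedAddCommGroup F] [InnerProductSpace ℂ F]
    [FiniteDimensional ℂ F] (Λ : (E →ₗ[ℂ] E) →ₗ[ℂ] (F →ₗ[ℂ] F))
    (Λd : (F →ₗ[ℂ] F) →ₗ[ℂ] (E →ₗ[ℂ] E)) : Prop :=
  ∀ ρ B, LinearMap.trace ℂ F (Λ ρ ∘ₗ B) = LinearMap.trace ℂ E (ρ ∘ₗ Λd B)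

/-- Channel post-processing: `Λ₀ ⪯ Λ` iff `Λ₀ = Γ ∘ Λ` for some channel `Γ`. -/
def ChanPP {E F G : Type*} [NormedAddCommGroup E] [InnerProductSpace ℂ E]
    [FiniteDimensional ℂ E] [NormedAddCommGroup F] [InnerProductSpace ℂ F]
    [FiniteDimensional ℂ F] [NormedAddCommGroup G] [InnerProductSpace ℂ G]
    [FiniteDimensional ℂ G]
    (Λ₀ : (E →ₗ[ℂ] E) →ₗ[ℂ] (G →ₗ[ℂ] G)) (Λ : (E →ₗ[ℂ] E) →ₗ[ℂ] (F →ₗ[ℂ] F)) : Prop :=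
  ∃ Γ : (F →ₗ[ℂ] F) →ₗ[ℂ] (G →ₗ[ℂ] G), IsChannel Γ ∧ Λ₀ = Γ ∘ₗ Λ

/-- Post-processing equivalence of channels. -/
def ChanEquiv {E F G : Type*} [NormedAddCommGroup E] [InnerProductSpace ℂ E]
    [FiniteDimensional ℂ E] [NormedAddCommGroup F] [InnerProductSpace ℂ F]
    [FiniteDimensional ℂ F] [NormedAddCommGroup G] [InnerProductSpace ℂ G]
    [FiniteDimensional ℂ G]
    (Λ₀ : (E →ₗ[ℂ] E) →ₗ[ℂ] (G →ₗ[ℂ] G)) (Λ : (E →ₗ[ℂ] E) →ₗ[ℂ] (F →ₗ[ℂ] F)) : Prop :=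
  ChanPP Λ₀ Λ ∧ ChanPP Λ Λ₀

/-- Observable post-processing: `B ⪯ A` via a stochastic matrix `p`. -/
def ObsPP {E : Type*} [NormedAddCommGroup E] [InnerProductSpace ℂ E]
    [FiniteDimensional ℂ E] {Ω₁ Ω₂ : Type*} [Fintype Ω₁] [Fintype Ω₂]
    (B : Ω₂ → E →ₗ[ℂ] E) (A : Ω₁ → E →ₗ[ℂ] E) : Prop :=
  ∃ p : Ω₂ → Ω₁ → ℝ, (∀ k j, 0 ≤ p k j) ∧ (∀ j, ∑ k, p k j = 1) ∧
    ∀ k, B k = ∑ j, (p k j : ℂ) • A j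

/-- Post-processing equivalence of observables. -/
def ObsEquiv {E : Type*} [NormedAddCommGroup E] [InnerProductSpace ℂ E]
    [FiniteDimensional ℂ E] {Ω₁ Ω₂ : Type*} [Fintype Ω₁] [Fintype Ω₂]
    (B : Ω₂ → E →ₗ[ℂ] E) (A : Ω₁ → E →ₗ[ℂ] E) : Prop :=
  ObsPP B A ∧ ObsPP A B

/-- `B` is a relabeling of `A` (along some function `f` on outcomes). -/
def IsRelabeling {E : Type*} [NormedAddCommGroup E] [InnerProductSpace ℂ E]
    [FiniteDimensional ℂ E] {Ω₁ Ω₂ : Type*} [Fintype Ω₁] [Fintype Ω₂] [DecidableEq Ω₂]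
    (B : Ω₂ → E →ₗ[ℂ] E) (A : Ω₁ → E →ₗ[ℂ] E) : Prop :=
  ∃ f : Ω₁ → Ω₂, ∀ k, B k = ∑ j ∈ Finset.univ.filter (fun j => f j = k), A j

/-- A minimally sufficient observable: every observable post-processing
equivalent to it is a refinement of it (i.e. it is a relabeling of every such observable). -/
def MinSufficient {E : Type*} [NormedAddCommGroup E] [InnerProductSpace ℂ E]
    [FiniteDimensional ℂ E] {Ω : Type*} [Fintype Ω] [DecidableEq Ω]
    (A : Ω → E →ₗ[ℂ] E) : Prop :=
  ∀ (Ω' : Type) (_ : Fintype Ω') (B : Ω' → E →ₗ[ℂ] E),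
    IsPOVM B → ObsEquiv B A → IsRelabeling A B

/-- Compatibility of an observable `A` and a channel `Λ`: there is an instrument
with the outcome statistics of `A` whose total channel is `Λ`. -/
def CompatObsChan {E F : Type*} [NormedAddCommGroup E] [InnerProductSpace ℂ E]
    [FiniteDimensional ℂ E] [NormedAddCommGroup F] [InnerProductSpace ℂ F]
    [FiniteDimensional ℂ F] {Ω : Type*} [Fintype Ω]
    (A : Ω → E →ₗ[ℂ] E) (Λ : (E →ₗ[ℂ] E) →ₗ[ℂ] (F →ₗ[ℂ] F)) : Prop :=
  ∃ I : Ω → ((E →ₗ[ℂ] E) →ₗ[ℂ] (F →ₗ[ℂ] F)),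
    (∀ j, IsCPMap (I j)) ∧
    (∀ j ρ, LinearMap.trace ℂ F (I j ρ) = LinearMap.trace ℂ E (ρ ∘ₗ A j)) ∧
    ∑ j, I j = Λ

/-- Joint measurability (compatibility) of two observables. -/
def JointlyMeasurable {E : Type*} [NormedAddCommGroup E] [InnerProductSpace ℂ E]
    [FiniteDimensional ℂ E] {Ω₁ Ω₂ : Type*} [Fintype Ω₁] [Fintype Ω₂]
    (A : Ω₁ → E →ₗ[ℂ] E) (B : Ω₂ → E →ₗ[ℂ] E) : Prop :=
  ∃ G : Ω₁ × Ω₂ → E →ₗ[ℂ] E, IsPOVM G ∧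
    (∀ j, A j = ∑ k, G (j, k)) ∧ (∀ k, B k = ∑ j, G (j, k))

/-- An extreme observable: an extreme point of the convex set of observables
with the given outcome set. -/
def IsExtremeObs {E : Type*} [NormedAddCommGroup E] [InnerProductSpace ℂ E]
    [FiniteDimensional ℂ E] {Ω : Type*} [Fintype Ω] (A : Ω → E →ₗ[ℂ] E) : Prop :=
  IsPOVM A ∧ ∀ (B₁ B₂ : Ω → E →ₗ[ℂ] E) (t : ℝ), IsPOVM B₁ → IsPOVM B₂ →
    0 < t → t < 1 → (∀ j, A j = (t : ℂ) • B₁ j + ((1 - t : ℝ) : ℂ) • B₂ j) →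
    (B₁ = A ∧ B₂ = A)

/-- `|x⟩⟨y|` : the rank-one operator `z ↦ ⟨y, z⟩ x`. -/
def outer {E : Type*} [NormedAddCommGroup E] [InnerProductSpace ℂ E] (x y : E) :
    E →ₗ[ℂ] E where
  toFun z := (inner ℂ y z : ℂ) • x
  map_add' z w := by simp [inner_add_right, add_smul]
  map_smul' c z := by simp [inner_smul_right, smul_smul]

/-- Loewner order on operators: `S ≤ T` iff `T - S` is positive semidefinite. -/
def LoewnerLE {E : Type*} [NormedAddCommGroup E] [InnerProductSpace ℂ E]
    [FiniteDimensional ℂ E] (S T : E →ₗ[ℂ] E) : Prop :=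
  IsPosOp (T - S)

/-- Compression of an operator `T` on `F` to a subspace `S`: `P_S ∘ T ∘ incl_S`. -/
def compressTo {F : Type*} [NormedAddCommGroup F] [InnerProductSpace ℂ F]
    [FiniteDimensional ℂ F] (S : Submodule ℂ F) (T : F →ₗ[ℂ] F) : ↥S →ₗ[ℂ] ↥S :=
  have := FiniteDimensional.complete ℂ ↥S
  S.orthogonalProjectionOnto.toLinearMap ∘ₗ T ∘ₗ S.subtype

end

noncomputable section Aux

set_option linter.unusedSectionVars false

open LinearMap in
@[simp] lemma sandwich_apply {E F : Type*} [NormedAddCommGroup E] [InnerProductSpace ℂ E]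
    [NormedAddCommGroup F] [InnerProductSpace ℂ F]
    (U : E →ₗ[ℂ] F) (V : F →ₗ[ℂ] E) (σ : E →ₗ[ℂ] E) :
    sandwich U V σ = U ∘ₗ σ ∘ₗ V := rfl

variable {E F G : Type*} [NormedAddCommGroup E] [InnerProductSpace ℂ E] [FiniteDimensional ℂ E]
  [NormedAddCommGroup F] [InnerProductSpace ℂ F] [FiniteDimensional ℂ F]
  [NormedAddCommGroup G] [InnerProductSpace ℂ G] [FiniteDimensional ℂ G]

lemma trace_eq_sum_inner' (T : E →ₗ[ℂ] E) {ι : Type*} [Fintype ι] [DecidableEq ι]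
    (b : OrthonormalBasis ι ℂ E) :
    LinearMap.trace ℂ E T = ∑ i, (inner ℂ (b i) (T (b i)) : ℂ) := by
  rw [LinearMap.trace_eq_matrix_trace ℂ b.toBasis T, Matrix.trace]
  congr 1
  ext i
  rw [Matrix.diag_apply, LinearMap.toMatrix_apply, b.coe_toBasis_repr_apply, b.repr_apply_apply,
    b.coe_toBasis]

lemma trace_outer (x y : E) : LinearMap.trace ℂ E (outer x y) = (inner ℂ y x : ℂ) := by
  classical
  set b := stdOrthonormalBasis ℂ E
  rw [trace_eq_sum_inner' _ b]
  simp only [outer, LinearMap.coe_mk, AddHom.coe_mk, inner_smul_right]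
  exact OrthonormalBasis.sum_inner_mul_inner b y x

lemma outer_comp (x y : E) (T : E →ₗ[ℂ] E) :
    outer x y ∘ₗ T = outer x (LinearMap.adjoint T y) := by
  ext z
  simp [outer, LinearMap.adjoint_inner_left]

lemma trace_outer_comp (x y : E) (T : E →ₗ[ℂ] E) :
    LinearMap.trace ℂ E (outer x y ∘ₗ T) = (inner ℂ y (T x) : ℂ) := by
  rw [outer_comp, trace_outer, LinearMap.adjoint_inner_left]

/-- Nondegeneracy of `ρ ↦ tr(ρ T)`. -/
lemma eq_of_trace_comp_eq {T S : E →ₗ[ℂ] E}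
    (h : ∀ ρ : E →ₗ[ℂ] E, LinearMap.trace ℂ E (ρ ∘ₗ T) = LinearMap.trace ℂ E (ρ ∘ₗ S)) :
    T = S := by
  apply LinearMap.ext
  intro x
  apply ext_inner_left ℂ
  intro y
  have := h (outer x y)
  rwa [trace_outer_comp, trace_outer_comp] at this

lemma trace_kraus (V : E →ₗ[ℂ] F) (ρ : E →ₗ[ℂ] E) :
    LinearMap.trace ℂ F (V ∘ₗ ρ ∘ₗ LinearMap.adjoint V)
      = LinearMap.trace ℂ E (ρ ∘ₗ (LinearMap.adjoint V ∘ₗ V)) := by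
  rw [← LinearMap.comp_assoc, LinearMap.trace_comp_comm' (LinearMap.adjoint V) (V ∘ₗ ρ),
    ← LinearMap.comp_assoc, LinearMap.trace_comp_comm' ρ (LinearMap.adjoint V ∘ₗ V)]

/-- Kraus operators of a trace-`A j`-instrument element sum to `A j`. -/
lemma kraus_sum_eq {ι : Type*} [Fintype ι] (V : ι → E →ₗ[ℂ] F) (B : E →ₗ[ℂ] E)
    (h : ∀ ρ : E →ₗ[ℂ] E,
      LinearMap.trace ℂ F (∑ i, V i ∘ₗ ρ ∘ₗ LinearMap.adjoint (V i))
        = LinearMap.trace ℂ E (ρ ∘ₗ B)) :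
    ∑ i, LinearMap.adjoint (V i) ∘ₗ V i = B := by
  apply eq_of_trace_comp_eq
  intro ρ
  rw [← h ρ, map_sum]
  rw [← Module.End.mul_eq_comp, Finset.mul_sum]
  simp only [Module.End.mul_eq_comp, map_sum]
  exact Finset.sum_congr rfl fun i _ => (trace_kraus (V i) ρ).symm

/-- In a PVM, distinct projections are orthogonal. -/
lemma pvm_orth {Ω : Type*} [Fintype Ω] {P : Ω → F →ₗ[ℂ] F} (hP : IsPVM P)
    {j k : Ω} (hjk : j ≠ k) (x : F) : P j (P k x) = 0 := by
  classical
  set y := P k x with hy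
  have hidem : ∀ i, P i ∘ₗ P i = P i := fun i => (hP.1 i).2
  have hadj : ∀ i, LinearMap.adjoint (P i) = P i := fun i => (hP.1 i).1
  have happ : ∀ i z, P i (P i z) = P i z := by
    intro i z; rw [← LinearMap.comp_apply, hidem]
  have hPy : P k y = y := happ k x
  have hinner : ∀ i z, (inner ℂ z ((P i) z) : ℂ) = inner ℂ (P i z) (P i z) := by
    intro i z
    calc (inner ℂ z (P i z) : ℂ) = inner ℂ z (P i (P i z)) := by rw [happ]
      _ = inner ℂ (P i z) (P i z) := by
          have h := LinearMap.adjoint_inner_right (P i) z (P i z)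
          rw [hadj] at h
          exact h
  have h1 : ∑ i, (inner ℂ y (P i y) : ℂ) = inner ℂ y y := by
    rw [← inner_sum]
    congr 1
    have := congrArg (fun (T : F →ₗ[ℂ] F) => T y) hP.2
    simpa using this
  have hsumR : ∑ i, ‖P i y‖^2 = ‖y‖^2 := by
    have h2 : ∑ i, (inner ℂ (P i y) (P i y) : ℂ) = inner ℂ y y := by
      rw [← h1]; exact Finset.sum_congr rfl fun i _ => (hinner i y).symm
    have h2' : ∑ i, ((‖P i y‖ : ℝ) : ℂ)^2 = ((‖y‖ : ℝ) : ℂ)^2 := by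
      simpa [inner_self_eq_norm_sq_to_K] using h2
    exact_mod_cast h2'
  have hsplit := Finset.sum_erase_add Finset.univ (fun i => ‖P i y‖^2) (Finset.mem_univ k)
  have hPky : ‖P k y‖^2 = ‖y‖^2 := by rw [hPy]
  have hrest : ∑ i ∈ Finset.univ.erase k, ‖P i y‖^2 = 0 := by
    rw [hsumR] at hsplit
    linarith [hsplit, hPky]
  have hj0 : ‖P j y‖^2 = 0 := by
    have hnn : ∀ i ∈ Finset.univ.erase k, 0 ≤ ‖P i y‖^2 := fun i _ => sq_nonneg _
    exact (Finset.sum_eq_zero_iff_of_nonneg hnn).1 hrest j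
      (Finset.mem_erase.2 ⟨hjk, Finset.mem_univ j⟩)
  have : ‖P j y‖ = 0 := sq_eq_zero_iff.1 hj0
  simpa [hy] using norm_eq_zero.1 this

section FactorMap

variable (T : E →ₗ[ℂ] F) (V : E →ₗ[ℂ] G)

/-- Factorization of `V` through the range of `T` (extended by `0` on the orthocomplement). -/
def factorMap (h : LinearMap.ker T ≤ LinearMap.ker V) : F →ₗ[ℂ] G :=
  haveI := FiniteDimensional.complete ℂ ↥(LinearMap.range T)
  ((LinearMap.ker T).liftQ V h) ∘ₗ (LinearMap.quotKerEquivRange T).symm.toLinearMap ∘ₗ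
    (LinearMap.range T).orthogonalProjectionOnto.toLinearMap

lemma factorMap_comp (h : LinearMap.ker T ≤ LinearMap.ker V) (φ : E) :
    factorMap T V h (T φ) = V φ := by
  haveI := FiniteDimensional.complete ℂ ↥(LinearMap.range T)
  have hmem : T φ ∈ LinearMap.range T := LinearMap.mem_range_self T φ
  have h1 : (LinearMap.range T).orthogonalProjectionOnto (T φ) = ⟨T φ, hmem⟩ :=
    (LinearMap.range T).orthogonalProjectionOnto_mem_subspace_eq_self ⟨T φ, hmem⟩
  have h2 : (LinearMap.quotKerEquivRange T).symm ⟨T φ, hmem⟩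
      = Submodule.Quotient.mk φ := by
    apply (LinearMap.quotKerEquivRange T).injective
    rw [LinearEquiv.apply_symm_apply]
    exact Subtype.ext (LinearMap.quotKerEquivRange_apply_mk T φ).symm
  simp only [factorMap, LinearMap.comp_apply, ContinuousLinearMap.coe_coe, h1,
    LinearEquiv.coe_toLinearMap, h2, Submodule.liftQ_apply]

lemma factorMap_orth (h : LinearMap.ker T ≤ LinearMap.ker V) {x : F}
    (hx : x ∈ (LinearMap.range T)ᗮ) : factorMap T V h x = 0 := by
  haveI := FiniteDimensional.complete ℂ ↥(LinearMap.range T)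
  have h1 : (LinearMap.range T).orthogonalProjectionOnto x = 0 :=
    Submodule.orthogonalProjectionOnto_apply_of_mem_orthogonal hx
  simp only [factorMap, LinearMap.comp_apply, ContinuousLinearMap.coe_coe, h1,
    LinearEquiv.coe_toLinearMap, map_zero]

attribute [irreducible] factorMap

end FactorMap

/-- `x - P x ⟂ range P` for a self-adjoint idempotent `P`. -/
lemma sub_proj_mem_orth {Pj : F →ₗ[ℂ] F} (hadj : LinearMap.adjoint Pj = Pj)
    (hidem : Pj ∘ₗ Pj = Pj) (x : F) : x - Pj x ∈ (LinearMap.range Pj)ᗮ := by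
  rw [Submodule.mem_orthogonal]
  rintro u ⟨y, rfl⟩
  rw [inner_sub_right]
  have e1 := LinearMap.adjoint_inner_left Pj (Pj x) y
  rw [hadj] at e1
  have e2 : Pj (Pj x) = Pj x := by rw [← LinearMap.comp_apply, hidem]
  have e3 := LinearMap.adjoint_inner_left Pj x y
  rw [hadj] at e3
  rw [e1, e2, e3, sub_self]

lemma comp_sum_lin {ι : Type*} [Fintype ι] {α β γ : Type*} [AddCommGroup α] [Module ℂ α]
    [AddCommGroup β] [Module ℂ β] [AddCommGroup γ] [Module ℂ γ]
    (g : β →ₗ[ℂ] γ) (f : ι → α →ₗ[ℂ] β) : g ∘ₗ (∑ i, f i) = ∑ i, g ∘ₗ f i := by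
  ext x; simp [LinearMap.sum_apply, map_sum]

lemma sum_comp_lin {ι : Type*} [Fintype ι] {α β γ : Type*} [AddCommGroup α] [Module ℂ α]
    [AddCommGroup β] [Module ℂ β] [AddCommGroup γ] [Module ℂ γ]
    (f : ι → β →ₗ[ℂ] γ) (g : α →ₗ[ℂ] β) : (∑ i, f i) ∘ₗ g = ∑ i, f i ∘ₗ g := by
  ext x; simp [LinearMap.sum_apply]

lemma middle_sum_lin {ι : Type*} [Fintype ι] {α β γ δ : Type*} [AddCommGroup α] [Module ℂ α]
    [AddCommGroup β] [Module ℂ β] [AddCommGroup γ] [Module ℂ γ] [AddCommGroup δ] [Module ℂ δ]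
    (U : β →ₗ[ℂ] γ) (X : ι → α →ₗ[ℂ] β) (Y : δ →ₗ[ℂ] α) :
    U ∘ₗ (∑ i, X i) ∘ₗ Y = ∑ i, U ∘ₗ X i ∘ₗ Y := by
  ext x; simp [LinearMap.sum_apply, map_sum]

lemma isCPMap_of_kraus {ι : Type*} [Fintype ι] (W : ι → E →ₗ[ℂ] F)
    (Λ : (E →ₗ[ℂ] E) →ₗ[ℂ] (F →ₗ[ℂ] F))
    (h : ∀ ρ, Λ ρ = ∑ a, W a ∘ₗ ρ ∘ₗ LinearMap.adjoint (W a)) : IsCPMap Λ := by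
  classical
  let e := Fintype.equivFin ι
  refine ⟨Fintype.card ι, fun i => W (e.symm i), fun ρ => ?_⟩
  rw [h ρ]
  exact (Equiv.sum_comp e.symm fun a => W a ∘ₗ ρ ∘ₗ LinearMap.adjoint (W a)).symm

lemma isCPMap_comp {Λ : (E →ₗ[ℂ] E) →ₗ[ℂ] (F →ₗ[ℂ] F)} {Γ : (F →ₗ[ℂ] F) →ₗ[ℂ] (G →ₗ[ℂ] G)}
    (hΛ : IsCPMap Λ) (hΓ : IsCPMap Γ) : IsCPMap (Γ ∘ₗ Λ) := by
  obtain ⟨n, V, hV⟩ := hΛ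
  obtain ⟨m, U, hU⟩ := hΓ
  apply isCPMap_of_kraus (fun p : Fin m × Fin n => U p.1 ∘ₗ V p.2)
  intro ρ
  rw [LinearMap.comp_apply, hV, hU]
  rw [Fintype.sum_prod_type]
  refine Finset.sum_congr rfl fun a _ => ?_
  rw [middle_sum_lin]
  refine Finset.sum_congr rfl fun i _ => ?_
  rw [LinearMap.adjoint_comp]
  simp only [LinearMap.comp_assoc]

lemma isChannel_comp {Λ : (E →ₗ[ℂ] E) →ₗ[ℂ] (F →ₗ[ℂ] F)} {Γ : (F →ₗ[ℂ] F) →ₗ[ℂ] (G →ₗ[ℂ] G)}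
    (hΛ : IsChannel Λ) (hΓ : IsChannel Γ) : IsChannel (Γ ∘ₗ Λ) := by
  refine ⟨isCPMap_comp hΛ.1 hΓ.1, fun ρ => ?_⟩
  rw [LinearMap.comp_apply, hΓ.2, hΛ.2]

lemma adjoint_isometryEquiv (U : F ≃ₗᵢ[ℂ] G) :
    LinearMap.adjoint (U.toLinearEquiv.toLinearMap) = U.symm.toLinearEquiv.toLinearMap := by
  symm
  rw [LinearMap.eq_adjoint_iff]
  intro x y
  calc (inner ℂ (U.symm.toLinearEquiv.toLinearMap x) y : ℂ)
      = inner ℂ (U (U.symm x)) (U y) := by rw [← LinearIsometryEquiv.inner_map_map U]; rfl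
    _ = inner ℂ x (U.toLinearEquiv.toLinearMap y) := by rw [LinearIsometryEquiv.apply_symm_apply]; rfl

lemma conj_isChannel (U : F ≃ₗᵢ[ℂ] G) :
    IsChannel (sandwich (U.toLinearEquiv.toLinearMap) (U.symm.toLinearEquiv.toLinearMap)) := by
  constructor
  · apply isCPMap_of_kraus (fun _ : Fin 1 => U.toLinearEquiv.toLinearMap)
    intro ρ
    rw [Fin.sum_univ_one, adjoint_isometryEquiv]
    rfl
  · intro ρ
    have : (sandwich (U.toLinearEquiv.toLinearMap) (U.symm.toLinearEquiv.toLinearMap)) ρ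
        = U.toLinearEquiv.toLinearMap ∘ₗ ρ ∘ₗ U.symm.toLinearEquiv.toLinearMap := rfl
    rw [this, ← LinearMap.comp_assoc,
      LinearMap.trace_comp_comm' (U.symm.toLinearEquiv.toLinearMap) (U.toLinearEquiv.toLinearMap ∘ₗ ρ),
      ← LinearMap.comp_assoc]
    have h2 : U.symm.toLinearEquiv.toLinearMap ∘ₗ U.toLinearEquiv.toLinearMap = LinearMap.id := by
      ext x; simp
    rw [h2, LinearMap.id_comp]

section LD

variable {Ω : Type*} [Fintype Ω] {A : Ω → E →ₗ[ℂ] E} {P : Ω → F →ₗ[ℂ] F} {J : E →ₗ[ℂ] F}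

lemma adjoint_T (hP : IsPVM P) (j : Ω) :
    LinearMap.adjoint (P j ∘ₗ J) = LinearMap.adjoint J ∘ₗ P j := by
  rw [LinearMap.adjoint_comp, (hP.1 j).1]

lemma T_adj_T (hdil : IsNaimark A P J) (j : Ω) :
    LinearMap.adjoint (P j ∘ₗ J) ∘ₗ (P j ∘ₗ J) = A j := by
  rw [adjoint_T hdil.1 j, hdil.2.2 j]
  have hidem := (hdil.1.1 j).2
  calc (LinearMap.adjoint J ∘ₗ P j) ∘ₗ (P j ∘ₗ J)
      = LinearMap.adjoint J ∘ₗ (P j ∘ₗ P j) ∘ₗ J := by simp [LinearMap.comp_assoc]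
    _ = _ := by rw [hidem]

lemma leastDisturbing_apply (ρ : E →ₗ[ℂ] E) :
    leastDisturbing P J ρ = ∑ j, (P j ∘ₗ J) ∘ₗ ρ ∘ₗ (LinearMap.adjoint J ∘ₗ P j) := by
  simp [leastDisturbing, LinearMap.sum_apply, sandwich_apply]

lemma sum_povm_eq_one (hA : IsPOVM A) (ρ : E →ₗ[ℂ] E) :
    ∑ j, ρ ∘ₗ A j = ρ := by
  rw [← comp_sum_lin, hA.2, Module.End.one_eq_id, LinearMap.comp_id]

lemma leastDisturbing_isChannel (hA : IsPOVM A) (hdil : IsNaimark A P J) :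
    IsChannel (leastDisturbing P J) := by
  constructor
  · apply isCPMap_of_kraus (fun j => P j ∘ₗ J)
    intro ρ
    rw [leastDisturbing_apply]
    exact Finset.sum_congr rfl fun j _ => by rw [adjoint_T hdil.1]
  · intro ρ
    rw [leastDisturbing_apply, map_sum]
    have h1 : ∀ j, LinearMap.trace ℂ F ((P j ∘ₗ J) ∘ₗ ρ ∘ₗ (LinearMap.adjoint J ∘ₗ P j))
        = LinearMap.trace ℂ E (ρ ∘ₗ A j) := by
      intro j
      rw [← adjoint_T hdil.1 j, trace_kraus, T_adj_T hdil]
    rw [Finset.sum_congr rfl fun j _ => h1 j, ← map_sum, sum_povm_eq_one hA]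

lemma leastDisturbing_compat (hdil : IsNaimark A P J) :
    CompatObsChan A (leastDisturbing P J) := by
  refine ⟨fun j => sandwich (P j ∘ₗ J) (LinearMap.adjoint J ∘ₗ P j), ?_, ?_, rfl⟩
  · intro j
    apply isCPMap_of_kraus (fun _ : Fin 1 => P j ∘ₗ J)
    intro ρ
    rw [Fin.sum_univ_one, adjoint_T hdil.1]
    rfl
  · intro j ρ
    have h0 : (sandwich (P j ∘ₗ J) (LinearMap.adjoint J ∘ₗ P j)) ρ
        = (P j ∘ₗ J) ∘ₗ ρ ∘ₗ (LinearMap.adjoint J ∘ₗ P j) := rfl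
    rw [h0, ← adjoint_T hdil.1 j, trace_kraus, T_adj_T hdil]

end LD

section Factorization

open LinearMap

set_option maxHeartbeats 1000000

lemma exists_factor_channel {Ω : Type*} [Fintype Ω]
    {A : Ω → E →ₗ[ℂ] E} {P : Ω → F →ₗ[ℂ] F} {J : E →ₗ[ℂ] F}
    (hdil : IsMinimalNaimark A P J)
    (Λ : (E →ₗ[ℂ] E) →ₗ[ℂ] (G →ₗ[ℂ] G)) (hc : CompatObsChan A Λ) :
    ∃ Γ : (F →ₗ[ℂ] F) →ₗ[ℂ] (G →ₗ[ℂ] G), IsChannel Γ ∧ Λ = Γ ∘ₗ leastDisturbing P J := by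
  classical
  obtain ⟨hnai, hspan⟩ := hdil
  obtain ⟨hP, hJ, hAd⟩ := hnai
  obtain ⟨I, hICP, hItr, hIsum⟩ := hc
  choose n V hV using hICP
  have hadjP : ∀ j, LinearMap.adjoint (P j) = P j := fun j => (hP.1 j).1
  have hidemP : ∀ j, P j ∘ₗ P j = P j := fun j => (hP.1 j).2
  set T : Ω → E →ₗ[ℂ] F := fun j => P j ∘ₗ J with hTdef
  have hTadj : ∀ j, LinearMap.adjoint (T j) = LinearMap.adjoint J ∘ₗ P j :=
    fun j => adjoint_T hP j
  have hTT : ∀ j, LinearMap.adjoint (T j) ∘ₗ T j = A j :=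
    fun j => T_adj_T ⟨hP, hJ, hAd⟩ j
  have hVV : ∀ j, ∑ i, LinearMap.adjoint (V j i) ∘ₗ V j i = A j := by
    intro j
    apply kraus_sum_eq
    intro ρ
    rw [show (∑ i, V j i ∘ₗ ρ ∘ₗ LinearMap.adjoint (V j i)) = I j ρ from (hV j ρ).symm]
    exact hItr j ρ
  have hker : ∀ j (i : Fin (n j)), LinearMap.ker (T j) ≤ LinearMap.ker (V j i) := by
    intro j i φ hφ
    rw [LinearMap.mem_ker] at hφ ⊢
    have h1 : (inner ℂ φ ((A j) φ) : ℂ) = 0 := by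
      rw [← hTT j, LinearMap.comp_apply, LinearMap.adjoint_inner_right, hφ, inner_zero_left]
    have h2 : ∑ i', (inner ℂ (V j i' φ) (V j i' φ) : ℂ) = 0 := by
      rw [← h1, ← hVV j, LinearMap.sum_apply, inner_sum]
      exact Finset.sum_congr rfl fun i' _ => by
        rw [LinearMap.comp_apply, LinearMap.adjoint_inner_right]
    have h3 : ∑ i', ‖V j i' φ‖^2 = 0 := by
      have h2' : ∑ i', ((‖V j i' φ‖ : ℝ) : ℂ)^2 = 0 := by
        simpa [inner_self_eq_norm_sq_to_K] using h2
      exact_mod_cast h2'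
    have h4 : ‖V j i φ‖^2 = 0 :=
      (Finset.sum_eq_zero_iff_of_nonneg (fun _ _ => sq_nonneg _)).1 h3 i (Finset.mem_univ i)
    exact norm_eq_zero.1 (sq_eq_zero_iff.1 h4)
  have hrange : ∀ j, LinearMap.range (T j) = LinearMap.range (P j) := by
    intro j
    apply le_antisymm
    · rintro x ⟨φ, rfl⟩
      exact ⟨J φ, rfl⟩
    · rintro x ⟨y, rfl⟩
      have hy : y ∈ Submodule.span ℂ {x : F | ∃ k φ, x = P k (J φ)} := by
        rw [hspan]; exact Submodule.mem_top
      have hmm : P j y ∈ Submodule.map (P j) (Submodule.span ℂ {x : F | ∃ k φ, x = P k (J φ)}) :=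
        Submodule.mem_map_of_mem hy
      rw [Submodule.map_span] at hmm
      have hsub : (P j) '' {x : F | ∃ k φ, x = P k (J φ)} ⊆ ↑(LinearMap.range (T j)) := by
        rintro _ ⟨z, ⟨k, φ, rfl⟩, rfl⟩
        by_cases hk : k = j
        · subst hk
          have hthis : P k (P k (J φ)) = T k φ := by
            rw [← LinearMap.comp_apply, hidemP]; rfl
          rw [hthis]
          exact ⟨φ, rfl⟩
        · rw [pvm_orth hP (fun h => hk h.symm) (J φ)]
          exact Submodule.zero_mem _
      exact Submodule.span_le.2 hsub hmm
  obtain ⟨W, hWdef⟩ : ∃ W : (Σ j : Ω, Fin (n j)) → F →ₗ[ℂ] G,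
      ∀ p, W p = factorMap (T p.1) (V p.1 p.2) (hker p.1 p.2) :=
    ⟨fun p => factorMap (T p.1) (V p.1 p.2) (hker p.1 p.2), fun _ => rfl⟩
  have hWT : ∀ p : Σ j : Ω, Fin (n j), W p ∘ₗ T p.1 = V p.1 p.2 := by
    intro p
    apply LinearMap.ext
    intro φ
    rw [hWdef]
    exact factorMap_comp _ _ _ φ
  have hWP : ∀ (p : Σ j : Ω, Fin (n j)) (k : Ω), k ≠ p.1 → W p ∘ₗ P k = 0 := by
    intro p k hk
    apply LinearMap.ext
    intro x
    rw [LinearMap.comp_apply, LinearMap.zero_apply, hWdef]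
    apply factorMap_orth
    rw [hrange, Submodule.mem_orthogonal]
    rintro u ⟨y, rfl⟩
    have h5 := LinearMap.adjoint_inner_left (P p.1) (P k x) y
    rw [hadjP] at h5
    rw [h5, pvm_orth hP (Ne.symm hk) x, inner_zero_right]
  have hWproj : ∀ (p : Σ j : Ω, Fin (n j)) (x : F), W p x = W p (P p.1 x) := by
    intro p x
    have hsub : x - P p.1 x ∈ (LinearMap.range (T p.1))ᗮ := by
      rw [hrange]
      exact sub_proj_mem_orth (hadjP p.1) (hidemP p.1) x
    have h0 : W p (x - P p.1 x) = 0 := by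
      rw [hWdef]; exact factorMap_orth _ _ _ hsub
    have h6 : W p x - W p (P p.1 x) = 0 := by rw [← map_sub]; exact h0
    exact sub_eq_zero.1 h6
  have hWW : ∀ j : Ω, ∑ i : Fin (n j),
      LinearMap.adjoint (W ⟨j, i⟩) ∘ₗ W ⟨j, i⟩ = P j := by
    intro j
    apply LinearMap.ext
    intro x
    apply ext_inner_left ℂ
    intro y
    have hmy : P j y ∈ LinearMap.range (T j) := by rw [hrange j]; exact ⟨y, rfl⟩
    have hmx : P j x ∈ LinearMap.range (T j) := by rw [hrange j]; exact ⟨x, rfl⟩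
    obtain ⟨φ, hφ⟩ := hmy
    obtain ⟨ψ, hψ⟩ := hmx
    have key : ∀ i : Fin (n j),
        (inner ℂ y ((LinearMap.adjoint (W ⟨j, i⟩) ∘ₗ W ⟨j, i⟩) x) : ℂ)
          = inner ℂ (V j i φ) (V j i ψ) := by
      intro i
      rw [LinearMap.comp_apply, LinearMap.adjoint_inner_right,
        hWproj ⟨j, i⟩ y, hWproj ⟨j, i⟩ x]
      have e1 : W ⟨j, i⟩ (P j y) = V j i φ := by
        rw [← hφ, ← LinearMap.comp_apply, hWT ⟨j, i⟩]
      have e2 : W ⟨j, i⟩ (P j x) = V j i ψ := by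
        rw [← hψ, ← LinearMap.comp_apply, hWT ⟨j, i⟩]
      rw [e1, e2]
    calc (inner ℂ y ((∑ i : Fin (n j), LinearMap.adjoint (W ⟨j, i⟩) ∘ₗ W ⟨j, i⟩) x) : ℂ)
        = ∑ i : Fin (n j), (inner ℂ y ((LinearMap.adjoint (W ⟨j, i⟩) ∘ₗ W ⟨j, i⟩) x) : ℂ) := by
          rw [LinearMap.sum_apply, inner_sum]
      _ = ∑ i : Fin (n j), (inner ℂ (V j i φ) (V j i ψ) : ℂ) :=
          Finset.sum_congr rfl fun i _ => key i
      _ = inner ℂ φ ((A j) ψ) := by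
          rw [← hVV j, LinearMap.sum_apply, inner_sum]
          exact Finset.sum_congr rfl fun i _ => by
            rw [LinearMap.comp_apply, LinearMap.adjoint_inner_right]
      _ = inner ℂ (T j φ) (T j ψ) := by
          rw [← hTT j, LinearMap.comp_apply, LinearMap.adjoint_inner_right]
      _ = inner ℂ (P j y) (P j x) := by rw [hφ, hψ]
      _ = inner ℂ y ((P j) x) := by
          have h7 := LinearMap.adjoint_inner_left (P j) (P j x) y
          rw [hadjP] at h7
          rw [h7, ← LinearMap.comp_apply, hidemP]
  refine ⟨∑ p : Σ j : Ω, Fin (n j), sandwich (W p) (LinearMap.adjoint (W p)), ⟨?_, ?_⟩, ?_⟩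
  · apply isCPMap_of_kraus W
    intro ρ
    simp [LinearMap.sum_apply, sandwich_apply]
  · intro σ
    have happ : (∑ p : Σ j : Ω, Fin (n j), sandwich (W p) (LinearMap.adjoint (W p))) σ
        = ∑ p : Σ j : Ω, Fin (n j), W p ∘ₗ σ ∘ₗ LinearMap.adjoint (W p) := by
      simp [LinearMap.sum_apply, sandwich_apply]
    rw [happ, map_sum, Finset.sum_congr rfl fun p _ => trace_kraus (W p) σ, ← map_sum,
      ← comp_sum_lin]
    have hsum1 : ∑ p : Σ j : Ω, Fin (n j), LinearMap.adjoint (W p) ∘ₗ W p = 1 := by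
      rw [← Finset.univ_sigma_univ, Finset.sum_sigma]
      rw [Finset.sum_congr rfl fun j _ => hWW j]
      exact hP.2
    rw [hsum1, Module.End.one_eq_id, LinearMap.comp_id]
  · apply LinearMap.ext
    intro ρ
    rw [LinearMap.comp_apply, ← hIsum, LinearMap.sum_apply]
    have hΓapp : ∀ σ, (∑ p : Σ j : Ω, Fin (n j), sandwich (W p) (LinearMap.adjoint (W p))) σ
        = ∑ p : Σ j : Ω, Fin (n j), W p ∘ₗ σ ∘ₗ LinearMap.adjoint (W p) := by
      intro σ
      simp [LinearMap.sum_apply, sandwich_apply]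
    rw [hΓapp, leastDisturbing_apply]
    have hterm : ∀ p : Σ j : Ω, Fin (n j),
        W p ∘ₗ (∑ k, (P k ∘ₗ J) ∘ₗ ρ ∘ₗ (LinearMap.adjoint J ∘ₗ P k)) ∘ₗ LinearMap.adjoint (W p)
          = V p.1 p.2 ∘ₗ ρ ∘ₗ LinearMap.adjoint (V p.1 p.2) := by
      intro p
      rw [middle_sum_lin]
      have hz : ∀ k ∈ Finset.univ, k ≠ p.1 →
          W p ∘ₗ ((P k ∘ₗ J) ∘ₗ ρ ∘ₗ (LinearMap.adjoint J ∘ₗ P k)) ∘ₗ LinearMap.adjoint (W p)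
            = 0 := by
        intro k _ hk
        have h1 : W p ∘ₗ (P k ∘ₗ J) = 0 := by
          rw [← LinearMap.comp_assoc, hWP p k hk, LinearMap.zero_comp]
        calc W p ∘ₗ ((P k ∘ₗ J) ∘ₗ ρ ∘ₗ (LinearMap.adjoint J ∘ₗ P k)) ∘ₗ LinearMap.adjoint (W p)
            = (W p ∘ₗ (P k ∘ₗ J)) ∘ₗ (ρ ∘ₗ (LinearMap.adjoint J ∘ₗ P k) ∘ₗ LinearMap.adjoint (W p)) := by
              simp only [LinearMap.comp_assoc]
          _ = 0 := by rw [h1, LinearMap.zero_comp]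
      rw [Finset.sum_eq_single p.1 hz (fun h => absurd (Finset.mem_univ p.1) h)]
      have hadjWT : (LinearMap.adjoint J ∘ₗ P p.1) ∘ₗ LinearMap.adjoint (W p)
          = LinearMap.adjoint (V p.1 p.2) := by
        rw [← adjoint_T hP, ← LinearMap.adjoint_comp, hWT]
      calc W p ∘ₗ ((P p.1 ∘ₗ J) ∘ₗ ρ ∘ₗ (LinearMap.adjoint J ∘ₗ P p.1)) ∘ₗ LinearMap.adjoint (W p)
          = (W p ∘ₗ (P p.1 ∘ₗ J)) ∘ₗ ρ ∘ₗ ((LinearMap.adjoint J ∘ₗ P p.1) ∘ₗ LinearMap.adjoint (W p)) := by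
            simp only [LinearMap.comp_assoc]
        _ = _ := by rw [show (P p.1 ∘ₗ J) = T p.1 from rfl, hWT p, hadjWT]
    rw [Finset.sum_congr rfl fun p _ => hterm p]
    rw [← Finset.univ_sigma_univ, Finset.sum_sigma]
    exact Finset.sum_congr rfl fun j _ => hV j ρ

end Factorization

lemma compat_postcomp {Ω : Type*} [Fintype Ω] {A : Ω → E →ₗ[ℂ] E}
    {Λ : (E →ₗ[ℂ] E) →ₗ[ℂ] (F →ₗ[ℂ] F)} {Γ : (F →ₗ[ℂ] F) →ₗ[ℂ] (G →ₗ[ℂ] G)}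
    (hc : CompatObsChan A Λ) (hΓ : IsChannel Γ) : CompatObsChan A (Γ ∘ₗ Λ) := by
  obtain ⟨I, hICP, hItr, hIsum⟩ := hc
  refine ⟨fun j => Γ ∘ₗ I j, fun j => isCPMap_comp (hICP j) hΓ.1, fun j ρ => ?_, ?_⟩
  · rw [LinearMap.comp_apply, hΓ.2, hItr]
  · rw [← hIsum]
    exact (comp_sum_lin Γ I).symm

lemma conj_conj_symm (U : F ≃ₗᵢ[ℂ] G) :
    sandwich U.symm.toLinearEquiv.toLinearMap U.toLinearEquiv.toLinearMap ∘ₗ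
      sandwich U.toLinearEquiv.toLinearMap U.symm.toLinearEquiv.toLinearMap = LinearMap.id := by
  apply LinearMap.ext; intro σ
  apply LinearMap.ext; intro x
  simp [sandwich]

lemma conj_isChannel' (U : F ≃ₗᵢ[ℂ] G) :
    IsChannel (sandwich (U.symm.toLinearEquiv.toLinearMap) (U.toLinearEquiv.toLinearMap)) := by
  have h := conj_isChannel U.symm
  simpa using h

end Aux

set_option maxHeartbeats 1000000

/-- A channel `Φ` is `C_A`-universal for `A` iff `Φ ∈ [Λ_A]`. -/
theorem stmt_10 {H M K : Type*}
    [NormedAddCommGroup H] [InnerProductSpace ℂ H] [FiniteDimensional ℂ H]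
    [NormedAddCommGroup M] [InnerProductSpace ℂ M] [FiniteDimensional ℂ M]
    [NormedAddCommGroup K] [InnerProductSpace ℂ K] [FiniteDimensional ℂ K]
    {ΩA : Type*} [Fintype ΩA]
    (A : ΩA → H →ₗ[ℂ] H) (hA : IsPOVM A)
    (P : ΩA → M →ₗ[ℂ] M) (J : H →ₗ[ℂ] M) (hdil : IsMinimalNaimark A P J)
    (Φ : (H →ₗ[ℂ] H) →ₗ[ℂ] (K →ₗ[ℂ] K)) (hΦ : IsChannel Φ) :
    (CompatObsChan A Φ ∧
      ∀ (K' : Type) [NormedAddCommGroup K'] [InnerProductSpace ℂ K']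
        [FiniteDimensional ℂ K'] (Λ : (H →ₗ[ℂ] H) →ₗ[ℂ] (K' →ₗ[ℂ] K')),
        IsChannel Λ → CompatObsChan A Λ →
        ∃ Λ' : (K →ₗ[ℂ] K) →ₗ[ℂ] (K' →ₗ[ℂ] K'), IsChannel Λ' ∧ Λ = Λ' ∘ₗ Φ) ↔
    ChanEquiv Φ (leastDisturbing P J) := by
  have hLDchan : IsChannel (leastDisturbing P J) := leastDisturbing_isChannel hA hdil.1
  have hLDcompat : CompatObsChan A (leastDisturbing P J) := leastDisturbing_compat hdil.1
  constructor
  · rintro ⟨hcompat, huniv⟩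
    constructor
    · obtain ⟨Γ, hΓ, hfact⟩ := exists_factor_channel hdil Φ hcompat
      exact ⟨Γ, hΓ, hfact⟩
    · -- transport to a Type-0 copy of M
      set m := Module.finrank ℂ M with hm
      set U : M ≃ₗᵢ[ℂ] EuclideanSpace ℂ (Fin m) := (stdOrthonormalBasis ℂ M).repr with hU
      set C : (M →ₗ[ℂ] M) →ₗ[ℂ]
          (EuclideanSpace ℂ (Fin m) →ₗ[ℂ] EuclideanSpace ℂ (Fin m)) :=
        sandwich U.toLinearEquiv.toLinearMap U.symm.toLinearEquiv.toLinearMap with hC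
      set C' : (EuclideanSpace ℂ (Fin m) →ₗ[ℂ] EuclideanSpace ℂ (Fin m)) →ₗ[ℂ]
          (M →ₗ[ℂ] M) :=
        sandwich U.symm.toLinearEquiv.toLinearMap U.toLinearEquiv.toLinearMap with hC'
      have hCchan : IsChannel C := conj_isChannel U
      have hC'chan : IsChannel C' := conj_isChannel' U
      have hC'C : C' ∘ₗ C = LinearMap.id := conj_conj_symm U
      have hΛ0chan : IsChannel (C ∘ₗ leastDisturbing P J) := isChannel_comp hLDchan hCchan
      have hΛ0compat : CompatObsChan A (C ∘ₗ leastDisturbing P J) :=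
        compat_postcomp hLDcompat hCchan
      obtain ⟨Λ', hΛ', heq⟩ := huniv (EuclideanSpace ℂ (Fin m))
        (C ∘ₗ leastDisturbing P J) hΛ0chan hΛ0compat
      refine ⟨C' ∘ₗ Λ', isChannel_comp hΛ' hC'chan, ?_⟩
      calc leastDisturbing P J
          = (C' ∘ₗ C) ∘ₗ leastDisturbing P J := by rw [hC'C, LinearMap.id_comp]
        _ = C' ∘ₗ (C ∘ₗ leastDisturbing P J) := by rw [LinearMap.comp_assoc]
        _ = C' ∘ₗ (Λ' ∘ₗ Φ) := by rw [heq]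
        _ = (C' ∘ₗ Λ') ∘ₗ Φ := by rw [LinearMap.comp_assoc]
  · rintro ⟨⟨Γ₁, hΓ₁, hΦeq⟩, ⟨Γ₂, hΓ₂, hLDeq⟩⟩
    constructor
    · rw [hΦeq]
      exact compat_postcomp hLDcompat hΓ₁
    · intro K' _ _ _ Λ hΛ hcomp
      obtain ⟨Γ, hΓ, hfact⟩ := exists_factor_channel hdil Λ hcomp
      refine ⟨Γ ∘ₗ Γ₂, isChannel_comp hΓ₂ hΓ, ?_⟩
      rw [hfact, hLDeq, ← LinearMap.comp_assoc]
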